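/- Let p ≥ 1 be an integer, Q > 0, and let θ₀ ∈ E_p(Q) with Σ_{j≥0} v_j^{2p} θ_{0,j}² = Q − δ₀ for some 0 < δ₀ ≤ Q. Let ε_n = n^{−p/(2p+1)}, N = ⌈(2Q/(B₁² ε_n²))^{1/(2p)}⌉, and let B̄₁ > 0 satisfy B̄₁² < B₁² (1 − √(1 − δ₀/Q))² / 2^{4p+1}. Then for all sufficiently large n, every finitely supported sequence θ_N = (0, θ₁, …, θ_N, 0, 0, …) with Σ_{j=1}^N (θ_j − θ_{0,j})² ≤ B̄₁² ε_n² satisfies Σ_{j=0}^N v_j^{2p} θ_j² < Q (i.e., θ_N ∈ E_{p,N}(Q)) and Σ_{j=1}^N (θ_j − θ_{0,j})² ≤ B₁² ε_n² / 2. -/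

import Mathlib

open MeasureTheory Filter ProbabilityTheory

noncomputable section

/-- `v₀ = 0`; for `j ≥ 1`, `v_j = j+1` if `j` odd, `v_j = j` if `j` even. -/
def vcoef (j : ℕ) : ℕ := if j = 0 then 0 else if j % 2 = 1 then j + 1 else j

/-- The trigonometric basis of `L²[0,1]`. -/
def phiB (j : ℕ) (x : ℝ) : ℝ :=
  if j = 0 then 1
  else if j % 2 = 1 then Real.sqrt 2 * Real.sin (2 * Real.pi * (((j + 1) / 2 : ℕ) : ℝ) * x)
  else Real.sqrt 2 * Real.cos (2 * Real.pi * (((j / 2 : ℕ) : ℝ)) * x)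

/-- The Sobolev ellipsoid `E_p(Q)`. -/
def ellipsoid (p : ℕ) (Q : ℝ) : Set (ℕ → ℝ) :=
  {θ | Summable (fun j => (vcoef j : ℝ) ^ (2 * p) * θ j ^ 2) ∧
    ∑' j, (vcoef j : ℝ) ^ (2 * p) * θ j ^ 2 < Q}

/-- The Sobolev space `E_p = E_p(∞)`. -/
def sobolev (p : ℕ) : Set (ℕ → ℝ) :=
  {θ | Summable fun j => (vcoef j : ℝ) ^ (2 * p) * θ j ^ 2}

/-- `A = Σ_{j≥1} v_j^{-2p}`. -/
def Aconst (p : ℕ) : ℝ := ∑' j : ℕ, ((vcoef (j + 1) : ℝ) ^ (2 * p))⁻¹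

/-- `B = √(2QA)`. -/
def Bconst (p : ℕ) (Q : ℝ) : ℝ := Real.sqrt (2 * Q * Aconst p)

/-- `B₁² = e^{-8B}`. -/
def B1sq (p : ℕ) (Q : ℝ) : ℝ := Real.exp (-8 * Bconst p Q)

/-- `Σ_{j≥1} θ_j φ_j(x)`. -/
def logDen (θ : ℕ → ℝ) (x : ℝ) : ℝ := ∑' j : ℕ, θ (j + 1) * phiB (j + 1) x

/-- `f_θ(x) = exp(Σ_{j≥1} θ_j φ_j(x)) / ∫₀¹ exp(Σ_{j≥1} θ_j φ_j(t)) dt`. -/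
def fdens (θ : ℕ → ℝ) (x : ℝ) : ℝ :=
  Real.exp (logDen θ x) / ∫ t in Set.Icc (0 : ℝ) 1, Real.exp (logDen θ t)

/-- `P_θ`, the probability measure on `[0,1]` with density `f_θ`. -/
def Pmeas (θ : ℕ → ℝ) : Measure ℝ :=
  (volume.restrict (Set.Icc (0 : ℝ) 1)).withDensity fun x => ENNReal.ofReal (fdens θ x)

/-- Hellinger distance between two densities on `[0,1]`. -/
def hell (f g : ℝ → ℝ) : ℝ :=
  Real.sqrt (∫ x in Set.Icc (0 : ℝ) 1, (Real.sqrt (f x) - Real.sqrt (g x)) ^ 2)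

/-- Hellinger distance `d_H(P_θ, P_{θ'})`. -/
def dH (θ θ' : ℕ → ℝ) : ℝ := hell (fdens θ) (fdens θ')

/-- Posterior probability of a set `S` of parameters given data `xs` and prior `π`. -/
def posterior (π : Measure (ℕ → ℝ)) {n : ℕ} (xs : Fin n → ℝ) (S : Set (ℕ → ℝ)) : ℝ :=
  (∫ θ in S, ∏ i, fdens θ (xs i) ∂π) / ∫ θ, ∏ i, fdens θ (xs i) ∂π

/-- `ε_n = n^{-p/(2p+1)}`. -/
def eps (p : ℕ) (n : ℕ) : ℝ := (n : ℝ) ^ (-(p : ℝ) / (2 * p + 1))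

/-- Restriction of a measure to a set, normalized to a probability measure. -/
def normRestrict (μ : Measure (ℕ → ℝ)) (S : Set (ℕ → ℝ)) : Measure (ℕ → ℝ) :=
  (μ S)⁻¹ • μ.restrict S

/-- The Bayes estimator: posterior expected density. -/
def bayesEst (π : Measure (ℕ → ℝ)) {n : ℕ} (xs : Fin n → ℝ) (x : ℝ) : ℝ :=
  (∫ θ, fdens θ x * ∏ i, fdens θ (xs i) ∂π) / ∫ θ, ∏ i, fdens θ (xs i) ∂π

/-- `E_{θ₀}^n[ d_H²(f_{θ₀}, f̂_n) ]`, the risk of the Bayes estimator. -/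
def bayesRisk (π : Measure (ℕ → ℝ)) (θ₀ : ℕ → ℝ) (n : ℕ) : ℝ :=
  ∫ xs, (hell (fdens θ₀) (bayesEst π xs)) ^ 2 ∂(Measure.pi fun _ : Fin n => Pmeas θ₀)

end


open MeasureTheory

private lemma vcoef_le_succ (j : ℕ) : vcoef j ≤ j + 1 := by
  unfold vcoef; split_ifs <;> omega

private lemma sum_sq_add_le (s : Finset ℕ) (f g : ℕ → ℝ) :
    ∑ j ∈ s, (f j + g j) ^ 2 ≤
      (Real.sqrt (∑ j ∈ s, f j ^ 2) + Real.sqrt (∑ j ∈ s, g j ^ 2)) ^ 2 := by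
  have hf : 0 ≤ ∑ j ∈ s, f j ^ 2 := Finset.sum_nonneg fun j _ => sq_nonneg _
  have hg : 0 ≤ ∑ j ∈ s, g j ^ 2 := Finset.sum_nonneg fun j _ => sq_nonneg _
  have cs : (∑ j ∈ s, f j * g j) ^ 2 ≤ (∑ j ∈ s, f j ^ 2) * ∑ j ∈ s, g j ^ 2 :=
    Finset.sum_mul_sq_le_sq_mul_sq s f g
  have h1 : ∑ j ∈ s, f j * g j ≤
      Real.sqrt (∑ j ∈ s, f j ^ 2) * Real.sqrt (∑ j ∈ s, g j ^ 2) := by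
    calc ∑ j ∈ s, f j * g j ≤ |∑ j ∈ s, f j * g j| := le_abs_self _
      _ = Real.sqrt ((∑ j ∈ s, f j * g j) ^ 2) := (Real.sqrt_sq_eq_abs _).symm
      _ ≤ Real.sqrt ((∑ j ∈ s, f j ^ 2) * ∑ j ∈ s, g j ^ 2) := Real.sqrt_le_sqrt cs
      _ = _ := Real.sqrt_mul hf _
  have expand : ∑ j ∈ s, (f j + g j) ^ 2
      = ∑ j ∈ s, f j ^ 2 + 2 * ∑ j ∈ s, f j * g j + ∑ j ∈ s, g j ^ 2 := by
    rw [Finset.sum_congr rfl (fun j _ => by ring :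
      ∀ j ∈ s, (f j + g j) ^ 2 = f j ^ 2 + 2 * (f j * g j) + g j ^ 2),
      Finset.sum_add_distrib, Finset.sum_add_distrib, ← Finset.mul_sum]
  nlinarith [Real.sq_sqrt hf, Real.sq_sqrt hg, Real.sqrt_nonneg (∑ j ∈ s, f j ^ 2),
    Real.sqrt_nonneg (∑ j ∈ s, g j ^ 2)]


set_option maxHeartbeats 1600000 in
/-- Claim (b) in the proof of Theorem 3: for large n, finitely supported sequences close
to θ₀ lie in E_{p,N}(Q) and are within B₁ε_n/√2 of θ₀. -/
theorem statement_17 (p : ℕ) (hp : 1 ≤ p) (Q : ℝ) (hQ : 0 < Q)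
    (θ₀ : ℕ → ℝ) (δ₀ : ℝ) (hδ₀ : 0 < δ₀) (hδ₀Q : δ₀ ≤ Q)
    (hθ₀sum : Summable fun j => (vcoef j : ℝ) ^ (2 * p) * θ₀ j ^ 2)
    (hθ₀ : ∑' j : ℕ, (vcoef j : ℝ) ^ (2 * p) * θ₀ j ^ 2 = Q - δ₀)
    (Bbar : ℝ) (hBbar : 0 < Bbar)
    (hBbarlt : Bbar ^ 2 < B1sq p Q * (1 - Real.sqrt (1 - δ₀ / Q)) ^ 2 / 2 ^ (4 * p + 1)) :
    ∃ n₀ : ℕ, ∀ n ≥ n₀, ∀ N : ℕ,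
      N = ⌈(2 * Q / (B1sq p Q * eps p n ^ 2)) ^ ((1 : ℝ) / (2 * p))⌉₊ →
      ∀ θ : ℕ → ℝ, θ 0 = 0 → (∀ j, N < j → θ j = 0) →
        ∑ j ∈ Finset.Icc 1 N, (θ j - θ₀ j) ^ 2 ≤ Bbar ^ 2 * eps p n ^ 2 →
        (∑ j ∈ Finset.range (N + 1), (vcoef j : ℝ) ^ (2 * p) * θ j ^ 2 < Q ∧
          ∑ j ∈ Finset.Icc 1 N, (θ j - θ₀ j) ^ 2 ≤ B1sq p Q * eps p n ^ 2 / 2) := by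
  classical
  have hB1pos : 0 < B1sq p Q := Real.exp_pos _
  set r : ℝ := Real.sqrt (1 - δ₀ / Q) with hrdef
  have hr0 : 0 ≤ r := Real.sqrt_nonneg _
  have hr1 : r ≤ 1 := by
    rw [hrdef]
    have h0 : 0 ≤ δ₀ / Q := div_nonneg hδ₀.le hQ.le
    calc Real.sqrt (1 - δ₀ / Q) ≤ Real.sqrt 1 := Real.sqrt_le_sqrt (by linarith)
      _ = 1 := Real.sqrt_one
  have h1r : 0 ≤ 1 - r := by linarith
  have hp1 : (1:ℝ) ≤ (p:ℝ) := by exact_mod_cast hp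
  have hppos : (0:ℝ) < (p:ℝ) / (2 * p + 1) := by
    apply div_pos (by linarith)
    positivity
  have hlim : Filter.Tendsto (fun n : ℕ => eps p n) Filter.atTop (nhds 0) := by
    have h := (tendsto_rpow_neg_atTop hppos).comp
      (tendsto_natCast_atTop_atTop (R := ℝ))
    simpa [eps, Function.comp_def, neg_div] using h
  have hlim2 : Filter.Tendsto (fun n : ℕ => eps p n ^ 2 * B1sq p Q) Filter.atTop (nhds 0) := by
    have h := ((hlim.mul hlim).mul_const (B1sq p Q))
    simpa [sq, mul_assoc] using h
  have hev : ∀ᶠ n in Filter.atTop, eps p n ^ 2 * B1sq p Q < 2 * Q :=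
    hlim2.eventually_lt_const (by linarith)
  obtain ⟨m, hm⟩ := Filter.eventually_atTop.mp hev
  refine ⟨max m 1, fun n hn N hN θ hθ0 hθhigh hclose => ?_⟩
  have hn1 : 1 ≤ n := le_trans (le_max_right m 1) hn
  have hnm : m ≤ n := le_trans (le_max_left m 1) hn
  have hepspos : 0 < eps p n := Real.rpow_pos_of_pos (by exact_mod_cast hn1) _
  -- second conclusion
  have hpow2 : (2:ℝ) ≤ 2 ^ (4 * p + 1) := by
    calc (2:ℝ) = 2 ^ 1 := (pow_one 2).symm
      _ ≤ 2 ^ (4 * p + 1) := pow_le_pow_right₀ one_le_two (by omega)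
  have key2 : Bbar ^ 2 ≤ B1sq p Q / 2 := by
    have h1 : B1sq p Q * (1 - r) ^ 2 ≤ B1sq p Q :=
      mul_le_of_le_one_right hB1pos.le
        (by nlinarith [mul_nonneg hr0 (by linarith : (0:ℝ) ≤ 2 - r)])
    have h2 : B1sq p Q * (1 - r) ^ 2 / 2 ^ (4 * p + 1) ≤ B1sq p Q / 2 :=
      div_le_div₀ hB1pos.le h1 two_pos hpow2
    linarith
  have conc2 : ∑ j ∈ Finset.Icc 1 N, (θ j - θ₀ j) ^ 2 ≤ B1sq p Q * eps p n ^ 2 / 2 := by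
    have h := mul_le_mul_of_nonneg_right key2 (sq_nonneg (eps p n))
    calc ∑ j ∈ Finset.Icc 1 N, (θ j - θ₀ j) ^ 2 ≤ Bbar ^ 2 * eps p n ^ 2 := hclose
      _ ≤ B1sq p Q / 2 * eps p n ^ 2 := h
      _ = B1sq p Q * eps p n ^ 2 / 2 := by ring
  refine ⟨?_, conc2⟩
  -- first conclusion
  set x : ℝ := 2 * Q / (B1sq p Q * eps p n ^ 2) with hxdef
  have hxden : 0 < B1sq p Q * eps p n ^ 2 := by positivity
  have hx1 : 1 ≤ x := by
    rw [hxdef, le_div_iff₀ hxden]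
    have := hm n hnm
    nlinarith
  set C : ℝ := x ^ ((1:ℝ) / (2 * p)) with hCdef
  have hC1 : 1 ≤ C := by
    calc (1:ℝ) = 1 ^ ((1:ℝ) / (2 * p)) := (Real.one_rpow _).symm
      _ ≤ x ^ ((1:ℝ) / (2 * p)) := Real.rpow_le_rpow zero_le_one hx1 (by positivity)
  have hCpos : 0 < C := lt_of_lt_of_le one_pos hC1
  have hN1 : 1 ≤ N := by rw [hN]; exact Nat.ceil_pos.mpr hCpos
  have hNC : (N:ℝ) ≤ 2 * C := by
    have h := Nat.ceil_lt_add_one hCpos.le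
    rw [hN]
    push_cast
    linarith [hC1, h]
  have hCx : C ^ (2 * p) = x := by
    rw [hCdef, ← Real.rpow_natCast (x ^ ((1:ℝ)/(2*p))) (2*p),
      ← Real.rpow_mul (by linarith : (0:ℝ) ≤ x)]
    have h2p : ((2 * p : ℕ) : ℝ) = 2 * (p:ℝ) := by push_cast; ring
    rw [h2p, one_div, inv_mul_cancel₀ (by positivity), Real.rpow_one]
  have hrange : Finset.range (N + 1) = insert 0 (Finset.Icc 1 N) := by
    ext j
    simp only [Finset.mem_range, Finset.mem_insert, Finset.mem_Icc]
    omega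
  have hsum0 : ∑ j ∈ Finset.range (N + 1), (vcoef j : ℝ) ^ (2 * p) * θ j ^ 2
      = ∑ j ∈ Finset.Icc 1 N, (vcoef j : ℝ) ^ (2 * p) * θ j ^ 2 := by
    rw [hrange, Finset.sum_insert (by simp)]
    simp [hθ0]
  set A : ℝ := ∑ j ∈ Finset.Icc 1 N, ((vcoef j : ℝ) ^ p * θ₀ j) ^ 2 with hAdef
  set Bs : ℝ := ∑ j ∈ Finset.Icc 1 N, ((vcoef j : ℝ) ^ p * (θ j - θ₀ j)) ^ 2 with hBsdef
  have hpowsplit : ∀ j : ℕ, ((vcoef j : ℝ)) ^ (2 * p) = ((vcoef j : ℝ) ^ p) ^ 2 := by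
    intro j; rw [← pow_mul, mul_comm]
  have step1 : ∑ j ∈ Finset.Icc 1 N, (vcoef j : ℝ) ^ (2 * p) * θ j ^ 2
      ≤ (Real.sqrt A + Real.sqrt Bs) ^ 2 := by
    have h := sum_sq_add_le (Finset.Icc 1 N)
      (fun j => (vcoef j : ℝ) ^ p * θ₀ j) (fun j => (vcoef j : ℝ) ^ p * (θ j - θ₀ j))
    have heq : ∑ j ∈ Finset.Icc 1 N, (vcoef j : ℝ) ^ (2 * p) * θ j ^ 2
        = ∑ j ∈ Finset.Icc 1 N,
          ((vcoef j : ℝ) ^ p * θ₀ j + (vcoef j : ℝ) ^ p * (θ j - θ₀ j)) ^ 2 := by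
      refine Finset.sum_congr rfl fun j _ => ?_
      rw [hpowsplit j]; ring
    rw [heq]
    exact h
  have hA : A ≤ Q - δ₀ := by
    have heq : A = ∑ j ∈ Finset.Icc 1 N, (vcoef j : ℝ) ^ (2 * p) * θ₀ j ^ 2 := by
      refine Finset.sum_congr rfl fun j _ => ?_
      rw [hpowsplit j]; ring
    rw [heq, ← hθ₀]
    exact Summable.sum_le_tsum _ (fun j _ => by positivity) hθ₀sum
  have hBs1 : Bs ≤ (2 * (N:ℝ)) ^ (2 * p) * ∑ j ∈ Finset.Icc 1 N, (θ j - θ₀ j) ^ 2 := by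
    rw [Finset.mul_sum]
    refine Finset.sum_le_sum fun j hj => ?_
    have hjN : j ≤ N := (Finset.mem_Icc.mp hj).2
    have hvj : (vcoef j : ℝ) ≤ 2 * (N:ℝ) := by
      have h1 := vcoef_le_succ j
      have h2 : (vcoef j : ℝ) ≤ (j:ℝ) + 1 := by exact_mod_cast h1
      have h3 : (j:ℝ) ≤ (N:ℝ) := by exact_mod_cast hjN
      have h4 : (1:ℝ) ≤ (N:ℝ) := by exact_mod_cast hN1
      linarith
    have h5 : (vcoef j : ℝ) ^ (2 * p) ≤ (2 * (N:ℝ)) ^ (2 * p) :=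
      pow_le_pow_left₀ (by positivity) hvj _
    calc ((vcoef j : ℝ) ^ p * (θ j - θ₀ j)) ^ 2
        = (vcoef j : ℝ) ^ (2 * p) * (θ j - θ₀ j) ^ 2 := by rw [hpowsplit j]; ring
      _ ≤ (2 * (N:ℝ)) ^ (2 * p) * (θ j - θ₀ j) ^ 2 :=
          mul_le_mul_of_nonneg_right h5 (sq_nonneg _)
  have hBs2 : Bs ≤ (4 * C) ^ (2 * p) * (Bbar ^ 2 * eps p n ^ 2) := by
    have h6 : (2 * (N:ℝ)) ^ (2 * p) ≤ (4 * C) ^ (2 * p) :=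
      pow_le_pow_left₀ (by positivity) (by linarith) _
    have h7 : (2 * (N:ℝ)) ^ (2 * p) * ∑ j ∈ Finset.Icc 1 N, (θ j - θ₀ j) ^ 2
        ≤ (4 * C) ^ (2 * p) * (Bbar ^ 2 * eps p n ^ 2) := by
      apply mul_le_mul h6 hclose (Finset.sum_nonneg fun j _ => sq_nonneg _) (by positivity)
    linarith [hBs1]
  have hxeps : x * eps p n ^ 2 = 2 * Q / B1sq p Q := by
    rw [hxdef]
    field_simp
  have hBs3 : Bs ≤ 4 ^ (2 * p) * (2 * Q / B1sq p Q) * Bbar ^ 2 := by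
    have h8 : (4 * C) ^ (2 * p) * (Bbar ^ 2 * eps p n ^ 2)
        = 4 ^ (2 * p) * (x * eps p n ^ 2) * Bbar ^ 2 := by
      rw [mul_pow, hCx]; ring
    rw [h8, hxeps] at hBs2
    exact hBs2
  have h4eq : (4:ℝ) ^ (2 * p) * 2 = 2 ^ (4 * p + 1) := by
    rw [show (4:ℝ) = 2 ^ 2 by norm_num, ← pow_mul, ← pow_succ]
    congr 1
    omega
  have h5' : Bbar ^ 2 * 2 ^ (4 * p + 1) < B1sq p Q * (1 - r) ^ 2 :=
    (lt_div_iff₀ (by positivity)).mp hBbarlt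
  have hstrict : 4 ^ (2 * p) * (2 * Q / B1sq p Q) * Bbar ^ 2 < Q * (1 - r) ^ 2 := by
    have heq9 : (4:ℝ) ^ (2 * p) * (2 * Q / B1sq p Q) * Bbar ^ 2
        = (Bbar ^ 2 * 2 ^ (4 * p + 1)) * (Q / B1sq p Q) := by
      rw [← h4eq]; ring
    rw [heq9]
    calc (Bbar ^ 2 * 2 ^ (4 * p + 1)) * (Q / B1sq p Q)
        < (B1sq p Q * (1 - r) ^ 2) * (Q / B1sq p Q) :=
          mul_lt_mul_of_pos_right h5' (by positivity)
      _ = Q * (1 - r) ^ 2 := by field_simp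
  have hBslt : Bs < Q * (1 - r) ^ 2 := lt_of_le_of_lt hBs3 hstrict
  have hsB : Real.sqrt Bs < Real.sqrt Q * (1 - r) := by
    have h := Real.sqrt_lt_sqrt (Finset.sum_nonneg fun j _ => sq_nonneg _) hBslt
    rwa [Real.sqrt_mul hQ.le, Real.sqrt_sq h1r] at h
  have hsqQr : Real.sqrt (Q - δ₀) = Real.sqrt Q * r := by
    rw [hrdef, ← Real.sqrt_mul hQ.le]
    congr 1
    field_simp
  have hsA : Real.sqrt A ≤ Real.sqrt Q * r := by
    have h := Real.sqrt_le_sqrt hA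
    rwa [hsqQr] at h
  have hfin : Real.sqrt A + Real.sqrt Bs < Real.sqrt Q := by
    have hid : Real.sqrt Q * r + Real.sqrt Q * (1 - r) = Real.sqrt Q := by ring
    linarith
  calc ∑ j ∈ Finset.range (N + 1), (vcoef j : ℝ) ^ (2 * p) * θ j ^ 2
      = ∑ j ∈ Finset.Icc 1 N, (vcoef j : ℝ) ^ (2 * p) * θ j ^ 2 := hsum0
    _ ≤ (Real.sqrt A + Real.sqrt Bs) ^ 2 := step1
    _ < Real.sqrt Q ^ 2 := by
        exact pow_lt_pow_left₀ hfin (by positivity) (by norm_num)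
    _ = Q := Real.sq_sqrt hQ.le
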